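/- Fix q ∈ ℝ with 0 < q < 1 and nonzero A, B, δ, Λ ∈ ℂ with |AδΛ| < 1, and assume (ABΛ;q)_m ≠ 0 for all m ≥ 0. Set z = Λ + q/(ABδΛ). For n ≥ 0 define Q_n = Λⁿ (A;q)_n (B;q)_n / (ABΛ;q)_n · ₂φ₁(BΛ, Bqⁿ; ABΛqⁿ; q, AδΛ). Then for every n ≥ 1, Q_{n+1} − (z − (1 + δ^{−1}) qⁿ) Q_n + (q/(ABδ)) (1 − Aq^{n−1})(1 − Bq^{n−1}) Q_{n−1} = 0, i.e. (Q_n) solves the associated Al-Salam–Chihara recurrence. -/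

import Mathlib

open Filter

noncomputable def qp (q a : ℂ) (n : ℕ) : ℂ := ∏ j ∈ Finset.range n, (1 - a * q ^ j)
noncomputable def qpInf (q a : ℂ) : ℂ := ∏' j : ℕ, (1 - a * q ^ j)
noncomputable def phi32 (q a b c d e w : ℂ) : ℂ :=
  ∑' k : ℕ, (qp q a k * qp q b k * qp q c k) / (qp q d k * qp q e k * qp q q k) * w ^ k
noncomputable def phi21 (q a b c w : ℂ) : ℂ :=
  ∑' k : ℕ, (qp q a k * qp q b k) / (qp q c k * qp q q k) * w ^ k
noncomputable def phi11 (q a b w : ℂ) : ℂ :=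
  ∑' k : ℕ, qp q a k / (qp q b k * qp q q k) * (-1) ^ k * q ^ (k * (k - 1) / 2) * w ^ k

noncomputable def Prec {K : Type*} [Field K] (a b2 : ℕ → K) (z : K) : ℕ → K
  | 0 => 1
  | 1 => z - a 0
  | n + 2 => (z - a (n + 1)) * Prec a b2 z (n + 1) - b2 (n + 1) * Prec a b2 z n

noncomputable def aCDH (q A B C D : ℂ) (n : ℕ) : ℂ :=
  (1 / A + 1 / B + 1 / C + 1 / D) * q ^ (n : ℤ) - (1 + q) * q ^ (2 * (n : ℤ) - 1)

noncomputable def bCDH (q A B C D : ℂ) (n : ℕ) : ℂ :=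
  q / (A * B * C * D) * (1 - A * q ^ ((n : ℤ) - 1)) * (1 - B * q ^ ((n : ℤ) - 1)) *
    (1 - C * q ^ ((n : ℤ) - 1)) * (1 - D * q ^ ((n : ℤ) - 1))

/-- `X` solves the associated continuous dual `q`-Hahn recurrence
`X_{n+1} - (z - a_n) X_n + b_n² X_{n-1} = 0` for `n ≥ 1`. -/
def SolvesCDH (q A B C D z : ℂ) (X : ℕ → ℂ) : Prop :=
  ∀ n : ℕ, 1 ≤ n →
    X (n + 1) - (z - aCDH q A B C D n) * X n + bCDH q A B C D n * X (n - 1) = 0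


lemma qp_zero (q a : ℂ) : qp q a 0 = 1 := Finset.prod_range_zero _

lemma qp_succ (q a : ℂ) (n : ℕ) : qp q a (n + 1) = qp q a n * (1 - a * q ^ n) :=
  Finset.prod_range_succ _ n

lemma qp_add (q a : ℂ) (n k : ℕ) : qp q a (n + k) = qp q a n * qp q (a * q ^ n) k := by
  unfold qp
  rw [Finset.prod_range_add]
  refine congrArg _ (Finset.prod_congr rfl fun j _ => ?_)
  rw [pow_add]; ring

noncomputable def Taux (q A B Λ w : ℂ) (n k : ℕ) : ℂ :=
  Λ ^ n * qp q A n * qp q B (n + k) * qp q (B * Λ) k * w ^ k /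
    (qp q (A * B * Λ) (n + k) * qp q q k)

noncomputable def Gaux (q A B δ Λ : ℂ) (m k : ℕ) : ℂ :=
  q * (1 - A * B * Λ * q ^ m) * Taux q A B Λ (A * δ * Λ) (m + 1) k -
    q * Λ * (1 - A * q ^ m) * (1 - B * q ^ m) * Taux q A B Λ (A * δ * Λ) m k


variable (q A B δ Λ : ℂ)

set_option maxHeartbeats 2000000 in
lemma key_identity (hA : A ≠ 0) (hB : B ≠ 0) (hδ : δ ≠ 0) (hΛ : Λ ≠ 0)
    (hd : ∀ j : ℕ, (1 : ℂ) - A * B * Λ * q ^ j ≠ 0)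
    (hD : ∀ m : ℕ, qp q (A * B * Λ) m ≠ 0)
    (hQ : ∀ m : ℕ, qp q q m ≠ 0)
    (hqf : ∀ j : ℕ, (1 : ℂ) - q * q ^ j ≠ 0) (m k : ℕ) :
    B * (A * δ * Λ) *
      (Taux q A B Λ (A * δ * Λ) (m + 2) k -
        ((Λ + q / (A * B * δ * Λ)) - (1 + δ⁻¹) * q ^ (m + 1)) *
          Taux q A B Λ (A * δ * Λ) (m + 1) k +
        q / (A * B * δ) * (1 - A * q ^ m) * (1 - B * q ^ m) *
          Taux q A B Λ (A * δ * Λ) m k) =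
      Gaux q A B δ Λ m (k + 1) - Gaux q A B δ Λ m k := by
  have h1 := hD (m + k)
  have h3 := hQ k
  have h4 : (1 : ℂ) - q * q ^ k ≠ 0 := hqf k
  have hd0 : (1 : ℂ) - A * B * Λ * (q ^ m * q ^ k) ≠ 0 := by
    have := hd (m + k); rwa [pow_add] at this
  have hd1 : (1 : ℂ) - A * B * Λ * (q ^ m * q ^ k * q) ≠ 0 := by
    have := hd (m + k + 1); rwa [pow_succ, pow_add] at this
  have hd0' : (1 : ℂ) - A * B * Λ * q ^ m * q ^ k ≠ 0 := by
    rw [mul_assoc]; exact hd0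
  have hd1' : (1 : ℂ) - A * B * Λ * q ^ m * q ^ k * q ≠ 0 := by
    intro h; apply hd1; linear_combination h
  have hd1'' : (1 : ℂ) - A * B * Λ * q * q ^ m * q ^ k ≠ 0 := by
    intro h; apply hd1; linear_combination h
  have h4a : (1 : ℂ) - q ^ k * q ≠ 0 := by rw [mul_comm]; exact h4
  have h4b : (1 : ℂ) - q ^ (k + 1) ≠ 0 := by rw [pow_succ, mul_comm]; exact h4
  set t : ℂ := Λ ^ m * qp q A m * qp q B (m + k) * qp q (B * Λ) k * (A * δ * Λ) ^ k /
      (qp q (A * B * Λ) (m + k) * qp q q k) with ht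
  have e0 : Taux q A B Λ (A * δ * Λ) m k = t := rfl
  have e1 : (1 - A * B * Λ * (q ^ m * q ^ k)) * Taux q A B Λ (A * δ * Λ) (m + 1) k =
      t * (Λ * (1 - A * q ^ m) * (1 - B * (q ^ m * q ^ k))) := by
    unfold Taux
    rw [show m + 1 + k = (m + k) + 1 by omega]
    rw [qp_succ q A, qp_succ q (A*B*Λ), qp_succ q B, pow_succ Λ, pow_add, ht]
    field_simp
  have e2 : (1 - A * B * Λ * (q ^ m * q ^ k)) * ((1 - A * B * Λ * (q ^ m * q ^ k * q)) *
        Taux q A B Λ (A * δ * Λ) (m + 2) k) =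
      t * (Λ * Λ * (1 - A * q ^ m) * (1 - A * (q ^ m * q)) * (1 - B * (q ^ m * q ^ k)) *
          (1 - B * (q ^ m * q ^ k * q))) := by
    unfold Taux
    rw [show m + 2 + k = (m + k) + 1 + 1 by omega, show m + 2 = m + 1 + 1 from rfl]
    rw [qp_succ q A (m+1), qp_succ q A m, qp_succ q (A*B*Λ) ((m+k)+1), qp_succ q (A*B*Λ) (m+k),
      qp_succ q B ((m+k)+1), qp_succ q B (m+k), ht]
    simp only [pow_succ, pow_add]
    field_simp
  have e3 : (1 - A * B * Λ * (q ^ m * q ^ k)) * ((1 - q * q ^ k) *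
        Taux q A B Λ (A * δ * Λ) m (k + 1)) =
      t * ((1 - B * Λ * q ^ k) * (1 - B * (q ^ m * q ^ k)) * (A * δ * Λ)) := by
    unfold Taux
    rw [show m + (k + 1) = (m + k) + 1 by omega]
    rw [qp_succ q B, qp_succ q (A*B*Λ), qp_succ q (B*Λ), qp_succ q q, pow_succ, pow_add, ht]
    field_simp
  have e4 : (1 - A * B * Λ * (q ^ m * q ^ k)) * ((1 - A * B * Λ * (q ^ m * q ^ k * q)) *
        ((1 - q * q ^ k) * Taux q A B Λ (A * δ * Λ) (m + 1) (k + 1))) =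
      t * (Λ * (1 - A * q ^ m) * (1 - B * (q ^ m * q ^ k)) * (1 - B * (q ^ m * q ^ k * q)) *
          (1 - B * Λ * q ^ k) * (A * δ * Λ)) := by
    unfold Taux
    rw [show m + 1 + (k + 1) = (m + k) + 1 + 1 by omega]
    rw [qp_succ q A, qp_succ q (A*B*Λ) ((m+k)+1), qp_succ q (A*B*Λ) (m+k),
      qp_succ q B ((m+k)+1), qp_succ q B (m+k), qp_succ q (B*Λ), qp_succ q q, ht]
    simp only [pow_succ, pow_add]
    field_simp
  -- replace the fractional coefficients by polynomial ones
  have hc1 : B * (A * δ * Λ) * ((Λ + q / (A * B * δ * Λ)) - (1 + δ⁻¹) * q ^ (m + 1)) =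
      A * B * δ * Λ * Λ + q - (A * B * δ * Λ + A * B * Λ) * (q ^ m * q) := by
    have hq1 : B * (A * δ * Λ) * (q / (A * B * δ * Λ)) = q := by
      rw [mul_comm, div_mul_eq_mul_div, mul_div_assoc]
      rw [show A * B * δ * Λ = B * (A * δ * Λ) by ring, div_self (by
        simp [hA, hB, hδ, hΛ]), mul_one]
    have hq2 : B * (A * δ * Λ) * δ⁻¹ = A * B * Λ := by
      field_simp
    rw [pow_succ]
    linear_combination hq1 - q ^ m * q * hq2
  have hc0 : B * (A * δ * Λ) * (q / (A * B * δ) * (1 - A * q ^ m) * (1 - B * q ^ m)) =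
      q * Λ * (1 - A * q ^ m) * (1 - B * q ^ m) := by
    field_simp
  have hgoal : B * (A * δ * Λ) *
      (Taux q A B Λ (A * δ * Λ) (m + 2) k -
        ((Λ + q / (A * B * δ * Λ)) - (1 + δ⁻¹) * q ^ (m + 1)) *
          Taux q A B Λ (A * δ * Λ) (m + 1) k +
        q / (A * B * δ) * (1 - A * q ^ m) * (1 - B * q ^ m) *
          Taux q A B Λ (A * δ * Λ) m k) =
      B * (A * δ * Λ) * Taux q A B Λ (A * δ * Λ) (m + 2) k -
        (A * B * δ * Λ * Λ + q - (A * B * δ * Λ + A * B * Λ) * (q ^ m * q)) *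
          Taux q A B Λ (A * δ * Λ) (m + 1) k +
        q * Λ * (1 - A * q ^ m) * (1 - B * q ^ m) * Taux q A B Λ (A * δ * Λ) m k := by
    rw [← hc1, ← hc0]; ring
  rw [hgoal]
  unfold Gaux
  apply mul_left_cancel₀ (mul_ne_zero (mul_ne_zero hd0 hd1) h4)
  linear_combination
    ((1 - q * q ^ k) * (B * (A * δ * Λ))) * e2 +
    ((q * (1 - A * B * Λ * q ^ m) -
        (A * B * δ * Λ * Λ + q - (A * B * δ * Λ + A * B * Λ) * (q ^ m * q))) *
      ((1 - A * B * Λ * (q ^ m * q ^ k * q)) * (1 - q * q ^ k))) * e1 +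
    (q * Λ * (1 - A * q ^ m) * (1 - B * q ^ m) * (1 - A * B * Λ * (q ^ m * q ^ k * q))) * e3 -
    (q * (1 - A * B * Λ * q ^ m)) * e4

lemma Gaux_zero (hA : A ≠ 0) (hB : B ≠ 0) (hδ : δ ≠ 0) (hΛ : Λ ≠ 0)
    (hd : ∀ j : ℕ, (1 : ℂ) - A * B * Λ * q ^ j ≠ 0)
    (hD : ∀ m : ℕ, qp q (A * B * Λ) m ≠ 0)
    (hQ : ∀ m : ℕ, qp q q m ≠ 0) (m : ℕ) :
    Gaux q A B δ Λ m 0 = 0 := by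
  unfold Gaux Taux
  simp only [Nat.add_zero, qp_zero, pow_zero, mul_one, one_mul]
  rw [qp_succ q A, qp_succ q (A*B*Λ), qp_succ q B, pow_succ Λ]
  have h1 : qp q (A * B * Λ) m ≠ 0 := hD m
  have h2 : (1:ℂ) - A * B * Λ * q ^ m ≠ 0 := hd m
  field_simp
  ring



set_option maxHeartbeats 2000000 in
lemma Taux_ratio (q A B Λ w : ℂ)
    (hd : ∀ j : ℕ, (1 : ℂ) - A * B * Λ * q ^ j ≠ 0)
    (hD : ∀ m : ℕ, qp q (A * B * Λ) m ≠ 0)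
    (hQ : ∀ m : ℕ, qp q q m ≠ 0)
    (hqf : ∀ j : ℕ, (1 : ℂ) - q * q ^ j ≠ 0) (n k : ℕ) :
    Taux q A B Λ w n (k + 1) =
      Taux q A B Λ w n k *
        ((1 - B * Λ * q ^ k) * (1 - B * q ^ n * q ^ k) * w /
          ((1 - A * B * Λ * q ^ n * q ^ k) * (1 - q * q ^ k))) := by
  unfold Taux
  rw [show n + (k + 1) = (n + k) + 1 by omega]
  rw [qp_succ q B, qp_succ q (A*B*Λ), qp_succ q (B*Λ), qp_succ q q, pow_succ, pow_add]
  have h1 := hD (n + k)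
  have h2 : (1 : ℂ) - A * B * Λ * (q ^ n * q ^ k) ≠ 0 := by
    have := hd (n + k); rwa [pow_add] at this
  have h3 := hQ k
  have h4 := hqf k
  have h2' : (1 : ℂ) - A * B * Λ * q ^ n * q ^ k ≠ 0 := by
    rw [mul_assoc]; exact h2
  have h4a : (1 : ℂ) - q ^ k * q ≠ 0 := by rw [mul_comm]; exact h4
  field_simp

/-- The functions `Q_n^{(1)}` of (6.5) solve the associated Al-Salam--Chihara
recurrence (6.1). -/
theorem stmt16 (q : ℝ) (hq0 : 0 < q) (hq1 : q < 1)
    (A B δ Λ : ℂ) (hA : A ≠ 0) (hB : B ≠ 0) (hδ : δ ≠ 0) (hΛ : Λ ≠ 0)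
    (harg : ‖A * δ * Λ‖ < 1)
    (hden : ∀ m : ℕ, qp q (A * B * Λ) m ≠ 0)
    (z : ℂ) (hz : z = Λ + (q : ℂ) / (A * B * δ * Λ))
    (Q : ℕ → ℂ)
    (hQ : ∀ n : ℕ, Q n =
      Λ ^ n * (qp q A n * qp q B n) / qp q (A * B * Λ) n *
        phi21 q (B * Λ) (B * (q : ℂ) ^ n) (A * B * Λ * (q : ℂ) ^ n) (A * δ * Λ)) :
    ∀ n : ℕ, 1 ≤ n →
      Q (n + 1) - (z - (1 + δ⁻¹) * (q : ℂ) ^ n) * Q n +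
        (q : ℂ) / (A * B * δ) * (1 - A * (q : ℂ) ^ ((n : ℤ) - 1)) *
          (1 - B * (q : ℂ) ^ ((n : ℤ) - 1)) * Q (n - 1) = 0 := by
  -- basic nonvanishing facts
  have hw : A * δ * Λ ≠ 0 := mul_ne_zero (mul_ne_zero hA hδ) hΛ
  have hw' : B * (A * δ * Λ) ≠ 0 := mul_ne_zero hB hw
  have hwn : ‖A * δ * Λ‖ < 1 := by exact harg
  have hfac : ∀ j : ℕ, (1 : ℂ) - A * B * Λ * (q : ℂ) ^ j ≠ 0 := by
    intro j
    have := hden (j + 1)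
    rw [qp_succ] at this
    exact right_ne_zero_of_mul this
  have hqfac : ∀ j : ℕ, (1 : ℂ) - (q : ℂ) * (q : ℂ) ^ j ≠ 0 := by
    intro j
    have h1 : (1 : ℂ) - (q : ℂ) * (q : ℂ) ^ j = ((1 - q ^ (j + 1) : ℝ) : ℂ) := by
      push_cast; ring
    rw [h1]
    have : (0:ℝ) < 1 - q ^ (j + 1) := by
      have := pow_lt_one₀ hq0.le hq1 (by omega : j + 1 ≠ 0)
      linarith
    exact_mod_cast this.ne'
  have hqq : ∀ k : ℕ, qp (q : ℂ) (q : ℂ) k ≠ 0 := by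
    intro k
    unfold qp
    exact Finset.prod_ne_zero_iff.mpr fun j _ => hqfac j
  -- each Q n is the sum of the explicit terms `Taux`
  have hQT : ∀ n : ℕ, Q n = ∑' k : ℕ, Taux (q : ℂ) A B Λ (A * δ * Λ) n k := by
    intro n
    rw [hQ n]
    unfold phi21
    rw [← tsum_mul_left]
    refine tsum_congr fun k => ?_
    unfold Taux
    rw [qp_add (q:ℂ) B n k, qp_add (q:ℂ) (A*B*Λ) n k]
    have h1 : qp (q:ℂ) (A*B*Λ) n ≠ 0 := hden n
    have h2 : qp (q:ℂ) (A*B*Λ*(q:ℂ)^n) k ≠ 0 := by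
      have := hden (n + k)
      rw [qp_add] at this
      exact right_ne_zero_of_mul this
    have h3 := hqq k
    field_simp
  -- summability of the terms, via the ratio test
  have hsum : ∀ n : ℕ, Summable (fun k => Taux (q : ℂ) A B Λ (A * δ * Λ) n k) := by
    intro n
    have hqlt : ‖((q:ℝ):ℂ)‖ < 1 := by
      rw [Complex.norm_real, Real.norm_eq_abs, abs_of_pos hq0]; exact hq1
    have hpow : Filter.Tendsto (fun k : ℕ => ((q:ℝ):ℂ) ^ k) atTop (nhds 0) :=
      tendsto_pow_atTop_nhds_zero_of_norm_lt_one hqlt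
    have hone : ∀ c : ℂ, Filter.Tendsto (fun k : ℕ => (1 : ℂ) - c * (q:ℂ) ^ k) atTop (nhds 1) := by
      intro c
      have h0 : Filter.Tendsto (fun _ : ℕ => (1:ℂ)) atTop (nhds 1) := tendsto_const_nhds
      simpa using h0.sub (hpow.const_mul c)
    have hR : Filter.Tendsto
        (fun k : ℕ => (1 - B * Λ * (q:ℂ) ^ k) * (1 - B * (q:ℂ) ^ n * (q:ℂ) ^ k) * (A * δ * Λ) /
          ((1 - A * B * Λ * (q:ℂ) ^ n * (q:ℂ) ^ k) * (1 - (q:ℂ) * (q:ℂ) ^ k)))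
        atTop (nhds (A * δ * Λ)) := by
      have hnum : Filter.Tendsto
          (fun k : ℕ => (1 - B * Λ * (q:ℂ) ^ k) * (1 - B * (q:ℂ) ^ n * (q:ℂ) ^ k) * (A * δ * Λ))
          atTop (nhds (A * δ * Λ)) := by
        simpa using (((hone (B * Λ)).mul (hone (B * (q:ℂ) ^ n))).mul_const (A * δ * Λ))
      have hden' : Filter.Tendsto
          (fun k : ℕ => (1 - A * B * Λ * (q:ℂ) ^ n * (q:ℂ) ^ k) * (1 - (q:ℂ) * (q:ℂ) ^ k))
          atTop (nhds 1) := by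
        have h1 : Filter.Tendsto (fun k : ℕ => (1 : ℂ) - A * B * Λ * (q:ℂ) ^ n * (q:ℂ) ^ k)
            atTop (nhds 1) := hone (A * B * Λ * (q:ℂ) ^ n)
        simpa using h1.mul (hone (q:ℂ))
      have := hnum.div hden' one_ne_zero; rw [div_one] at this; exact this
    set r : ℝ := (‖A * δ * Λ‖ + 1) / 2 with hr
    have hr1 : r < 1 := by rw [hr]; linarith
    apply summable_of_ratio_norm_eventually_le hr1
    have hev : ∀ᶠ k : ℕ in atTop,
        ‖(1 - B * Λ * (q:ℂ) ^ k) * (1 - B * (q:ℂ) ^ n * (q:ℂ) ^ k) * (A * δ * Λ) /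
          ((1 - A * B * Λ * (q:ℂ) ^ n * (q:ℂ) ^ k) * (1 - (q:ℂ) * (q:ℂ) ^ k))‖ < r :=
      hR.norm.eventually_lt_const (by rw [hr]; linarith)
    filter_upwards [hev] with k hk
    rw [Taux_ratio (q:ℂ) A B Λ (A * δ * Λ) hfac hden hqq hqfac n k, norm_mul]
    calc ‖Taux (q:ℂ) A B Λ (A * δ * Λ) n k‖ *
          ‖(1 - B * Λ * (q:ℂ) ^ k) * (1 - B * (q:ℂ) ^ n * (q:ℂ) ^ k) * (A * δ * Λ) /
            ((1 - A * B * Λ * (q:ℂ) ^ n * (q:ℂ) ^ k) * (1 - (q:ℂ) * (q:ℂ) ^ k))‖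
        ≤ ‖Taux (q:ℂ) A B Λ (A * δ * Λ) n k‖ * r :=
          mul_le_mul_of_nonneg_left hk.le (norm_nonneg _)
      _ = r * ‖Taux (q:ℂ) A B Λ (A * δ * Λ) n k‖ := mul_comm _ _
  -- main proof
  intro n hn
  obtain ⟨m, rfl⟩ : ∃ m : ℕ, n = m + 1 := ⟨n - 1, by omega⟩
  have hzp : (q:ℂ) ^ (((m + 1 : ℕ) : ℤ) - 1) = (q:ℂ) ^ m := by
    rw [show ((m + 1 : ℕ) : ℤ) - 1 = (m : ℤ) by push_cast; ring, zpow_natCast]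
  rw [hzp, hz, show m + 1 + 1 = m + 2 from rfl, show m + 1 - 1 = m from rfl]
  set cz : ℂ := Λ + (q:ℂ) / (A * B * δ * Λ) - (1 + δ⁻¹) * (q:ℂ) ^ (m + 1) with hcz
  set cb : ℂ := (q:ℂ) / (A * B * δ) * (1 - A * (q:ℂ) ^ m) * (1 - B * (q:ℂ) ^ m) with hcb
  set F : ℕ → ℂ := fun k =>
    Taux (q:ℂ) A B Λ (A * δ * Λ) (m + 2) k - cz * Taux (q:ℂ) A B Λ (A * δ * Λ) (m + 1) k +
      cb * Taux (q:ℂ) A B Λ (A * δ * Λ) m k with hF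
  have hFsum : Summable F := by
    refine Summable.add (Summable.sub (hsum (m + 2)) ?_) ?_
    · exact (hsum (m + 1)).mul_left cz
    · exact (hsum m).mul_left cb
  have hLHS : Q (m + 2) - cz * Q (m + 1) + cb * Q m = ∑' k, F k := by
    rw [hQT (m + 2), hQT (m + 1), hQT m, ← tsum_mul_left, ← tsum_mul_left,
      ← Summable.tsum_sub (hsum (m + 2)) ((hsum (m + 1)).mul_left cz),
      ← Summable.tsum_add (Summable.sub (hsum (m + 2)) ((hsum (m + 1)).mul_left cz))
        ((hsum m).mul_left cb)]
  have hkey : ∀ k : ℕ, B * (A * δ * Λ) * F k =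
      Gaux (q:ℂ) A B δ Λ m (k + 1) - Gaux (q:ℂ) A B δ Λ m k := by
    intro k
    rw [hF]
    exact key_identity (q:ℂ) A B δ Λ hA hB hδ hΛ hfac hden hqq hqfac m k
  have hps : ∀ K : ℕ, ∑ k ∈ Finset.range K, F k =
      (B * (A * δ * Λ))⁻¹ * Gaux (q:ℂ) A B δ Λ m K := by
    intro K
    have h := Finset.sum_range_sub (fun j => Gaux (q:ℂ) A B δ Λ m j) K
    rw [Gaux_zero (q:ℂ) A B δ Λ hA hB hδ hΛ hfac hden hqq m, sub_zero] at h
    have h2 : ∑ k ∈ Finset.range K, B * (A * δ * Λ) * F k = Gaux (q:ℂ) A B δ Λ m K := by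
      rw [← h]
      exact Finset.sum_congr rfl fun k _ => hkey k
    rw [← Finset.mul_sum] at h2
    rw [← h2, inv_mul_cancel_left₀ hw']
  have hGt : Filter.Tendsto (fun K : ℕ => (B * (A * δ * Λ))⁻¹ * Gaux (q:ℂ) A B δ Λ m K)
      atTop (nhds 0) := by
    have t1 := (hsum (m + 1)).tendsto_atTop_zero
    have t2 := (hsum m).tendsto_atTop_zero
    have hG : Filter.Tendsto (fun K : ℕ => Gaux (q:ℂ) A B δ Λ m K) atTop (nhds 0) := by
      have := (t1.const_mul ((q:ℂ) * (1 - A * B * Λ * (q:ℂ) ^ m))).sub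
        (t2.const_mul ((q:ℂ) * Λ * (1 - A * (q:ℂ) ^ m) * (1 - B * (q:ℂ) ^ m)))
      simpa [Gaux] using this
    simpa using hG.const_mul (B * (A * δ * Λ))⁻¹
  have htsum0 : ∑' k, F k = 0 := by
    have hhs := hFsum.hasSum.tendsto_sum_nat
    rw [show (fun K => ∑ k ∈ Finset.range K, F k) =
      (fun K : ℕ => (B * (A * δ * Λ))⁻¹ * Gaux (q:ℂ) A B δ Λ m K) from funext hps] at hhs
    exact tendsto_nhds_unique hhs hGt
  rw [hLHS, htsum0]
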